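/- Let Λ̃=(Δ̃,Θ̃) be a normalized binary directive bi-sequence of the form Δ̃=ν̃(a ā)^ω and Θ̃=σ̃(ϑ̄ ϑ)^ω, where ν̃ is a finite word over {0,1}, σ̃ a finite sequence of antimorphisms from {E,R} whose last element is ϑ, |ν̃|=|σ̃|=n₀, a∈{0,1}, ϑ∈{E,R}, ā is the letter distinct from a and ϑ̄ the antimorphism distinct from ϑ. Let x denote the unique finite word with w_{n₀}x=w_{n₀+1}, and let (ϑϑ̄)(x) denote the image of x under the composition ϑ∘ϑ̄. Then for every n>n₀ there exists k∈ℕ such that either w_n=w_{n₀}(x·(ϑϑ̄)(x))^k or w_n=w_{n₀}(x·(ϑϑ̄)(x))^k·x. Consequently, u(Λ̃) is purely periodic with period q, where q is the finite word determined by q·w_{n₀}=w_{n₀+1}·(ϑϑ̄)(x). -/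

import Mathlib

/-!
Generalized pseudostandard words (de Luca–De Luca) over binary and ternary
alphabets: antimorphisms, pseudopalindromic closure, directive bi-sequences.
-/

namespace GPS

variable {A : Type*} [Inhabited A]

/-- The involutory antimorphism on finite words induced by the letter map `f`:
reverse the word and apply `f` letterwise. -/
def anti (f : A → A) (w : List A) : List A := (w.map f).reverse

/-- `w` is an `f`-palindrome (a `ϑ`-palindrome for the antimorphism induced by `f`). -/
def IsPal (f : A → A) (w : List A) : Prop := anti f w = w

/-- The `f`-palindromic closure of `w`: a shortest `f`-palindrome having `w` as a
prefix (returns `w` itself in the degenerate case where none exists). -/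
noncomputable def closure (f : A → A) (w : List A) : List A := by
  classical
  exact if h : ∃ n : ℕ, ∃ p : List A, p.length = n ∧ w <+: p ∧ IsPal f p then
    Classical.choose (Nat.find_spec h)
  else w

/-- The sequence of pseudopalindromic prefixes `w_n` of the generalized
pseudostandard word `u(Δ, Θ)`; `prefixes Δ Θ n` is the paper's `w_n`, with
`Δ n = δ_{n+1}` and `Θ n = ϑ_{n+1}` (0-based indexing of the bi-sequence). -/
noncomputable def prefixes (Δ : ℕ → A) (Θ : ℕ → A → A) : ℕ → List A
  | 0 => []
  | n + 1 => closure (Θ n) (prefixes Δ Θ n ++ [Δ n])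

/-- The generalized pseudostandard word `u(Δ, Θ)` as an infinite word `ℕ → A`. -/
noncomputable def word (Δ : ℕ → A) (Θ : ℕ → A → A) (k : ℕ) : A :=
  (prefixes Δ Θ (k + 1)).getD k default

/-- `p` is a (finite) prefix of the infinite word `x`. -/
def IsPref (p : List A) (x : ℕ → A) : Prop := ∀ i < p.length, p.getD i default = x i

/-- `w` is a factor of the infinite word `x`. -/
def IsFactor (w : List A) (x : ℕ → A) : Prop :=
  ∃ i : ℕ, ∀ j < w.length, w.getD j default = x (i + j)

/-- `w` is a left special factor of the infinite word `x`. -/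
def LeftSpecial (w : List A) (x : ℕ → A) : Prop :=
  ∃ a b : A, a ≠ b ∧ IsFactor (a :: w) x ∧ IsFactor (b :: w) x

/-- The infinite word `x` is (eventually) periodic, i.e. of the form `z v^ω`
with `v` nonempty. -/
def Periodic (x : ℕ → A) : Prop :=
  ∃ p : ℕ, 0 < p ∧ ∃ N : ℕ, ∀ n, N ≤ n → x (n + p) = x n

/-- The infinite word `x` is purely periodic with period `q`, i.e. `x = q^ω`. -/
def PurePeriod (q : List A) (x : ℕ → A) : Prop :=
  q ≠ [] ∧ ∀ i : ℕ, x i = q.getD (i % q.length) default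

/-- Concatenation of `k` copies of the finite word `l`, i.e. `l^k`. -/
def wpow (l : List A) (k : ℕ) : List A := (List.replicate k l).flatten

/-! ### The binary alphabet `{0,1}` -/

/-- Letter map of the reversal antimorphism `R` over `{0,1}`. -/
def Rb : Fin 2 → Fin 2 := id

/-- Letter map of the exchange antimorphism `E` over `{0,1}` (`0 ↔ 1`). -/
def Eb : Fin 2 → Fin 2 := fun x => x + 1

/-- A binary directive bi-sequence is normalized if the sequence `(w_n)` contains
every prefix of `u(Δ,Θ)` that is an `R`-palindrome or an `E`-palindrome. -/
def NormalizedB (Δ : ℕ → Fin 2) (Θ : ℕ → Fin 2 → Fin 2) : Prop :=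
  ∀ p : List (Fin 2), IsPref p (word Δ Θ) → (IsPal Rb p ∨ IsPal Eb p) →
    ∃ n : ℕ, prefixes Δ Θ n = p

/-! ### The ternary alphabet `{0,1,2}` -/

/-- Letter map of the reversal antimorphism `R` over `{0,1,2}`. -/
def Rt : Fin 3 → Fin 3 := id

/-- Letter map of the exchange antimorphism `E_i` over `{0,1,2}`: it fixes `i`
and exchanges the other two letters (indeed `-(i+x) = i` iff `x = i` in `Fin 3`). -/
def Et (i : Fin 3) : Fin 3 → Fin 3 := fun x => -(i + x)

/-- A ternary directive bi-sequence is normalized if the sequence `(w_n)` contains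
every prefix of `u(Δ,Θ)` that is a `ϑ`-palindrome for some involutory antimorphism `ϑ`. -/
def NormalizedT (Δ : ℕ → Fin 3) (Θ : ℕ → Fin 3 → Fin 3) : Prop :=
  ∀ p : List (Fin 3), IsPref p (word Δ Θ) → (IsPal Rt p ∨ ∃ i : Fin 3, IsPal (Et i) p) →
    ∃ n : ℕ, prefixes Δ Θ n = p

end GPS
namespace GPS
set_option linter.unusedSectionVars false
set_option linter.dupNamespace false

variable {A : Type*} [Inhabited A]
variable {f g : A → A} {u v w d d' s t P x : List A}

theorem anti_append (f : A → A) (u v : List A) :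
    anti f (u ++ v) = anti f v ++ anti f u := by
  simp [anti]

@[simp] theorem anti_length (f : A → A) (w : List A) :
    (anti f w).length = w.length := by simp [anti]

theorem anti_anti_eq (f g : A → A) (w : List A) :
    anti f (anti g w) = (w.map g).map f := by
  simp [anti, List.map_reverse]

theorem map_invol (hf : ∀ c, f (f c) = c) (w : List A) : (w.map f).map f = w := by
  rw [List.map_map]
  simpa [Function.comp_def] using List.map_congr_left (fun c _ => hf c) |>.trans (List.map_id w)

theorem anti_anti (hf : ∀ c, f (f c) = c) (w : List A) :
    anti f (anti f w) = w := by
  rw [anti_anti_eq]; exact map_invol hf w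

theorem anti_inj (hf : ∀ c, f (f c) = c) (h : anti f u = anti f v) : u = v := by
  have := congrArg (anti f) h
  rwa [anti_anti hf, anti_anti hf] at this

theorem anti_map (f g : A → A) (w : List A) :
    anti f (w.map g) = anti (f ∘ g) w := by
  simp [anti, List.map_map]

theorem map_anti (f g : A → A) (w : List A) :
    (anti g w).map f = anti (f ∘ g) w := by
  simp [anti, List.map_map, List.map_reverse]

theorem anti_singleton (f : A → A) (c : A) : anti f [c] = [f c] := rfl

/-! wpow lemmas -/

@[simp] theorem wpow_zero (l : List A) : wpow l 0 = [] := rfl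

theorem wpow_succ (l : List A) (k : ℕ) : wpow l (k + 1) = l ++ wpow l k := by
  simp [wpow, List.replicate_succ]

theorem wpow_succ' (l : List A) (k : ℕ) : wpow l (k + 1) = wpow l k ++ l := by
  induction k with
  | zero => simp [wpow_succ]
  | succ k ih => rw [wpow_succ l (k+1), ih, ← List.append_assoc, ← wpow_succ, ih]

@[simp] theorem wpow_length (l : List A) (k : ℕ) : (wpow l k).length = k * l.length := by
  induction k with
  | zero => simp
  | succ k ih => rw [wpow_succ]; simp [ih, Nat.succ_mul]; ring

theorem anti_wpow (f : A → A) (l : List A) (k : ℕ) :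
    anti f (wpow l k) = wpow (anti f l) k := by
  induction k with
  | zero => simp [anti]
  | succ k ih => rw [wpow_succ, anti_append, ih, wpow_succ']

theorem wpow_conj (l m : List A) (k : ℕ) :
    l ++ wpow (m ++ l) k = wpow (l ++ m) k ++ l := by
  induction k with
  | zero => simp
  | succ k ih =>
    rw [wpow_succ' (m ++ l) k, ← List.append_assoc, ih, wpow_succ' (l ++ m) k]
    simp [List.append_assoc]

theorem wpow_getD (q : List A) (k i : ℕ) (hi : i < k * q.length) (d : A) :
    (wpow q k).getD i d = q.getD (i % q.length) d := by
  induction k generalizing i with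
  | zero => simp at hi
  | succ k ih =>
    rw [Nat.succ_mul] at hi
    rw [wpow_succ]
    by_cases h : i < q.length
    · rw [List.getD_append _ _ _ _ h, Nat.mod_eq_of_lt h]
    · push_neg at h
      rw [List.getD_append_right _ _ _ _ h, ih _ (by omega)]
      congr 1
      conv_rhs => rw [show i = q.length + (i - q.length) by omega, Nat.add_mod_left]
theorem getD_prefix {u v : List A} (h : u <+: v) {i : ℕ} (hi : i < u.length) (d : A) :
    v.getD i d = u.getD i d := by
  obtain ⟨t, rfl⟩ := h
  rw [List.getD_append _ _ _ _ hi]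

/-! palindromic extension lemmas -/

theorem pal_take_eq {w d : List A} (hf : ∀ c, f (f c) = c)
    (h : IsPal f (w ++ d)) (hd : d.length ≤ w.length) :
    anti f d = w.take d.length := by
  have h1 : anti f d ++ anti f w = w ++ d := by
    rw [← anti_append]; exact h
  have := congrArg (List.take d.length) h1
  rwa [List.take_append_of_le_length (by simp),
    List.take_append_of_le_length hd, List.take_of_length_le (by simp)] at this

theorem pal_extend_unique {w d d' : List A} (hf : ∀ c, f (f c) = c)
    (h : IsPal f (w ++ d)) (h' : IsPal f (w ++ d'))
    (hlen : d.length = d'.length) (hd : d.length ≤ w.length) : d = d' := by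
  have e1 := pal_take_eq hf h hd
  have e2 := pal_take_eq hf h' (hlen ▸ hd)
  rw [← hlen] at e2
  exact anti_inj hf (e1.trans e2.symm)

theorem pal_drop {w d : List A} (hf : ∀ c, f (f c) = c)
    (h : IsPal f (w ++ d)) (hd : d.length ≤ w.length) :
    IsPal f (w.drop d.length) := by
  have h1 : anti f d ++ anti f w = w ++ d := by
    rw [← anti_append]; exact h
  have h2 : anti f w = w.drop d.length ++ d := by
    have := congrArg (List.drop d.length) h1
    rwa [List.drop_append_of_le_length (by simp),
      List.drop_append_of_le_length hd, List.drop_of_length_le (by simp)] at this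
  have h3 : w = anti f d ++ w.drop d.length := by
    conv_lhs => rw [← List.take_append_drop d.length w, ← pal_take_eq hf h hd]
  have h4 : anti f w = anti f (w.drop d.length) ++ d := by
    conv_lhs => rw [h3, anti_append, anti_anti hf]
  rw [h4] at h2
  exact List.append_cancel_right h2

/-- a suffix of an `f`-palindrome maps to a prefix -/
theorem pal_suffix_prefix {W t : List A} (hW : IsPal f W) (ht : t <:+ W) :
    anti f t <+: W := by
  obtain ⟨r, rfl⟩ := ht
  conv_rhs => rw [← hW]
  rw [anti_append]
  exact List.prefix_append _ _

/-! closure lemmas -/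

theorem closure_prefix (f : A → A) (w : List A) : w <+: closure f w := by
  classical
  rw [closure]
  split
  · next h =>
    obtain ⟨-, h2, -⟩ := Classical.choose_spec (Nat.find_spec h)
    exact h2
  · exact List.prefix_refl w

theorem closure_spec (hex : ∃ p : List A, w <+: p ∧ IsPal f p) :
    IsPal f (closure f w) ∧
      ∀ T : List A, w <+: T → IsPal f T → (closure f w).length ≤ T.length := by
  classical
  obtain ⟨p0, hp0, hp0'⟩ := hex
  have h : ∃ n : ℕ, ∃ p : List A, p.length = n ∧ w <+: p ∧ IsPal f p :=
    ⟨p0.length, p0, rfl, hp0, hp0'⟩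
  rw [closure, dif_pos h]
  obtain ⟨h1, h2, h3⟩ := Classical.choose_spec (Nat.find_spec h)
  refine ⟨h3, fun T hT hT' => ?_⟩
  rw [h1]
  exact Nat.find_le ⟨T, rfl, hT, hT'⟩
theorem closure_eq {w T : List A} (hf : ∀ c, f (f c) = c)
    (hT : w <+: T) (hTpal : IsPal f T) (hTlen : T.length ≤ 2 * w.length)
    (hmax : ∀ s : List A, s <:+ w → IsPal f s → s.length + T.length ≤ 2 * w.length) :
    closure f w = T := by
  obtain ⟨hcpal, hcmin⟩ := closure_spec (f := f) (w := w) ⟨T, hT, hTpal⟩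
  have hcpre := closure_prefix f w
  have hclen : (closure f w).length ≤ T.length := hcmin T hT hTpal
  obtain ⟨d, hd⟩ := hcpre
  obtain ⟨d', hd'⟩ := hT
  rw [← hd] at hcpal ⊢
  rw [← hd'] at hTpal ⊢
  have hdlen : d.length ≤ w.length := by
    have := congrArg List.length hd
    have := congrArg List.length hd'
    simp at *
    omega
  rcases lt_or_eq_of_le hclen with hlt | heq
  · exfalso
    have hsuf : IsPal f (w.drop d.length) := pal_drop hf hcpal hdlen
    have := hmax (w.drop d.length) (List.drop_suffix _ _) hsuf
    have hl1 := congrArg List.length hd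
    simp at hl1
    have : (w.drop d.length).length = w.length - d.length := by simp
    omega
  · have hdd : d.length = d'.length := by
      have := congrArg List.length hd
      have := congrArg List.length hd'
      simp at *
      omega
    rw [pal_extend_unique hf hcpal hTpal hdd hdlen]

/-! prefixes chain -/

theorem prefixes_succ (Δ : ℕ → A) (Θ : ℕ → A → A) (n : ℕ) :
    prefixes Δ Θ (n + 1) = closure (Θ n) (prefixes Δ Θ n ++ [Δ n]) := rfl

theorem prefixes_prefix_succ (Δ : ℕ → A) (Θ : ℕ → A → A) (n : ℕ) :
    prefixes Δ Θ n <+: prefixes Δ Θ (n + 1) := by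
  rw [prefixes_succ]
  exact (List.prefix_append _ _).trans (closure_prefix _ _)

theorem prefixes_length_lt (Δ : ℕ → A) (Θ : ℕ → A → A) (n : ℕ) :
    (prefixes Δ Θ n).length < (prefixes Δ Θ (n + 1)).length := by
  have h := (closure_prefix (Θ n) (prefixes Δ Θ n ++ [Δ n])).length_le
  rw [← prefixes_succ] at h
  simp at h
  omega

theorem prefixes_length_strictMono (Δ : ℕ → A) (Θ : ℕ → A → A) :
    StrictMono (fun n => (prefixes Δ Θ n).length) :=
  strictMono_nat_of_lt_succ (prefixes_length_lt Δ Θ)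

theorem prefixes_mono (Δ : ℕ → A) (Θ : ℕ → A → A) {i j : ℕ} (hij : i ≤ j) :
    prefixes Δ Θ i <+: prefixes Δ Θ j := by
  induction j with
  | zero => simp_all
  | succ j ih =>
    rcases Nat.lt_or_ge i (j + 1) with h | h
    · exact (ih (by omega)).trans (prefixes_prefix_succ Δ Θ j)
    · have : i = j + 1 := by omega
      subst this
      exact List.prefix_refl _

theorem prefixes_length_ge (Δ : ℕ → A) (Θ : ℕ → A → A) (n : ℕ) :
    n ≤ (prefixes Δ Θ n).length := by
  induction n with
  | zero => simp
  | succ n ih => have := prefixes_length_lt Δ Θ n; omega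

theorem isPref_prefixes (Δ : ℕ → A) (Θ : ℕ → A → A) (n : ℕ) :
    IsPref (prefixes Δ Θ n) (word Δ Θ) := by
  intro i hi
  show _ = (prefixes Δ Θ (i + 1)).getD i default
  rcases Nat.le_total (i + 1) n with h | h
  · rw [getD_prefix (prefixes_mono Δ Θ h) (by have := prefixes_length_ge Δ Θ (i+1); omega)]
  · rw [getD_prefix (prefixes_mono Δ Θ h) hi]

theorem isPref_of_prefix {u : ℕ → A} {p v : List A} (h : v <+: p) (hp : IsPref p u) :
    IsPref v u := by
  intro i hi
  rw [← getD_prefix h hi]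
  exact hp i (lt_of_lt_of_le hi h.length_le)
theorem anti_congr {f g : A → A} (h : ∀ c, f c = g c) (w : List A) :
    anti f w = anti g w := by
  unfold anti
  rw [List.map_congr_left fun c _ => h c]

/-! the key normalization lemma -/

theorem no_long_pal_suffix
    (Δ : ℕ → Fin 2) (Θ : ℕ → Fin 2 → Fin 2) (hnorm : NormalizedB Δ Θ)
    (f g : Fin 2 → Fin 2)
    (hfgE : ∀ c, f (g c) = Eb c) (hgEf : ∀ c, g (Eb c) = f c)
    (hgS : g = Rb ∨ g = Eb)
    (n lo : ℕ)
    (hgap : ∀ j, (prefixes Δ Θ j).length ≤ lo ∨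
      (prefixes Δ Θ n).length ≤ (prefixes Δ Θ j).length)
    (hWpal : IsPal f (prefixes Δ Θ n))
    (b : Fin 2) (s : List (Fin 2)) (hs : s <:+ prefixes Δ Θ n ++ [b])
    (hspal : IsPal g s) :
    s.length ≤ lo + 2 := by
  by_contra hcon
  push_neg at hcon
  set W := prefixes Δ Θ n with hWdef
  obtain ⟨pre, hpre⟩ := hs
  have hlen : pre.length + s.length = W.length + 1 := by
    have := congrArg List.length hpre; simp at this; omega
  have hpreW : pre.length ≤ W.length := by omega
  have hsW : s = W.drop pre.length ++ [b] := by
    have h1 := congrArg (List.drop pre.length) hpre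
    rwa [List.drop_left, List.drop_append_of_le_length hpreW] at h1
  set t := W.drop pre.length with htdef
  have ht : t <:+ W := List.drop_suffix _ _
  have htlen : t.length = s.length - 1 := by
    have := congrArg List.length hsW; simp [htdef] at *; omega
  obtain ⟨c, m, hcm⟩ : ∃ c m, t = c :: m :=
    List.exists_cons_of_ne_nil (by intro h; rw [h] at htlen; simp at htlen; omega)
  have hmlen : m.length = s.length - 2 := by
    have := congrArg List.length hcm; simp [htlen] at this; omega
  -- from the palindromicity of s, m is a g-palindrome
  have hmg : anti g m = m := by
    have h1 : anti g s = s := hspal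
    rw [hsW, hcm] at h1
    have h2 : anti g ((c :: m) ++ [b]) = anti g [b] ++ (anti g m ++ [g c]) := by
      rw [anti_append]
      congr 1
      show anti g ([c] ++ m) = _
      rw [anti_append, anti_singleton]
    rw [h2, anti_singleton] at h1
    have h3 : g b :: (anti g m ++ [g c]) = c :: (m ++ [b]) := by simpa using h1
    have h4 : anti g m ++ [g c] = m ++ [b] := (List.cons.injEq _ _ _ _ ▸ h3).2
    exact (List.append_inj h4 (by simp)).1
  -- anti f m = map Eb m
  have hfm : anti f m = m.map Eb := by
    conv_lhs => rw [← hmg]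
    rw [anti_anti_eq, List.map_map]
    exact List.map_congr_left fun c _ => hfgE c
  -- m' := map Eb m is a g-palindrome
  set m' := m.map Eb with hm'def
  have hm'pal : IsPal g m' := by
    show anti g (m.map Eb) = m'
    rw [anti_map, anti_congr (f := g ∘ Eb) (g := f) hgEf, hfm]
  -- m' is a prefix of W
  have hm'pref : m' <+: W := by
    have h5 : anti f t <+: W := pal_suffix_prefix hWpal ht
    have h6 : anti f t = m' ++ [f c] := by
      rw [hcm]
      show anti f ([c] ++ m) = _
      rw [anti_append, anti_singleton, hfm]
    exact (List.prefix_append m' [f c]).trans (h6 ▸ h5)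
  have hm'pref' : IsPref m' (word Δ Θ) :=
    isPref_of_prefix hm'pref (isPref_prefixes Δ Θ n)
  obtain ⟨j, hj⟩ := hnorm m' hm'pref'
    (by rcases hgS with rfl | rfl
        · exact Or.inl hm'pal
        · exact Or.inr hm'pal)
  have hjlen := congrArg List.length hj
  have hm'len : m'.length = s.length - 2 := by simp [hm'def, hmlen]
  have hsle : s.length ≤ W.length + 1 := by omega
  rcases hgap j with h | h <;> rw [hjlen] at * <;> omega
theorem pal_witness {f : A → A} (hf : ∀ c, f (f c) = c) (w : List A) :
    IsPal f (w ++ anti f w) := by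
  show anti f (w ++ anti f w) = _
  rw [anti_append, anti_anti hf]

theorem closure_pal {f : A → A} (hf : ∀ c, f (f c) = c) (w : List A) :
    IsPal f (closure f w) :=
  (closure_spec ⟨w ++ anti f w, List.prefix_append _ _, pal_witness hf w⟩).1

theorem periodic_shape_binary_alternating' (Δ : ℕ → Fin 2) (Θ : ℕ → Fin 2 → Fin 2)
    (hΘ : ∀ n, Θ n = Rb ∨ Θ n = Eb)
    (hnorm : NormalizedB Δ Θ)
    (a : Fin 2) (ϑ ϑ' : Fin 2 → Fin 2)
    (hϑ : (ϑ = Rb ∧ ϑ' = Eb) ∨ (ϑ = Eb ∧ ϑ' = Rb))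
    (m₀ : ℕ) (hlast : Θ m₀ = ϑ)
    (hpat : ∀ l : ℕ, Δ (m₀ + 1 + 2*l) = a ∧ Δ (m₀ + 2 + 2*l) = Eb a ∧
      Θ (m₀ + 1 + 2*l) = ϑ' ∧ Θ (m₀ + 2 + 2*l) = ϑ)
    (x : List (Fin 2)) (hx : prefixes Δ Θ (m₀ + 1) ++ x = prefixes Δ Θ (m₀ + 2)) :
    (∀ n : ℕ, m₀ + 1 < n → ∃ k : ℕ,
      prefixes Δ Θ n = prefixes Δ Θ (m₀ + 1) ++ wpow (x ++ anti ϑ (anti ϑ' x)) k ∨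
      prefixes Δ Θ n = prefixes Δ Θ (m₀ + 1) ++ wpow (x ++ anti ϑ (anti ϑ' x)) k ++ x) ∧
    ∀ q : List (Fin 2),
      q ++ prefixes Δ Θ (m₀ + 1) = prefixes Δ Θ (m₀ + 2) ++ anti ϑ (anti ϑ' x) →
      PurePeriod q (word Δ Θ) := by
  -- letter-level facts
  have hEbEb : ∀ c : Fin 2, Eb (Eb c) = c := by decide
  have hff : ∀ c, ϑ (ϑ c) = c := by rcases hϑ with ⟨rfl, rfl⟩ | ⟨rfl, rfl⟩ <;> decide
  have hgg : ∀ c, ϑ' (ϑ' c) = c := by rcases hϑ with ⟨rfl, rfl⟩ | ⟨rfl, rfl⟩ <;> decide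
  have hfg : ∀ c, ϑ (ϑ' c) = Eb c := by rcases hϑ with ⟨rfl, rfl⟩ | ⟨rfl, rfl⟩ <;> decide
  have hgf : ∀ c, ϑ' (ϑ c) = Eb c := by rcases hϑ with ⟨rfl, rfl⟩ | ⟨rfl, rfl⟩ <;> decide
  have hfE : ∀ c, ϑ (Eb c) = ϑ' c := by rcases hϑ with ⟨rfl, rfl⟩ | ⟨rfl, rfl⟩ <;> decide
  have hgE : ∀ c, ϑ' (Eb c) = ϑ c := by rcases hϑ with ⟨rfl, rfl⟩ | ⟨rfl, rfl⟩ <;> decide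
  have hEg : ∀ c, Eb (ϑ' c) = ϑ c := by rcases hϑ with ⟨rfl, rfl⟩ | ⟨rfl, rfl⟩ <;> decide
  have hfS : ϑ = Rb ∨ ϑ = Eb := by rcases hϑ with ⟨rfl, rfl⟩ | ⟨rfl, rfl⟩ <;> simp
  have hgS : ϑ' = Rb ∨ ϑ' = Eb := by rcases hϑ with ⟨rfl, rfl⟩ | ⟨rfl, rfl⟩ <;> simp
  set P := prefixes Δ Θ (m₀ + 1) with hPdef
  set y := anti ϑ (anti ϑ' x) with hydef
  set z := x ++ y with hzdef
  set A' := anti ϑ x with hA'def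
  set B' := anti ϑ' x with hB'def
  have hΔ1 : Δ (m₀ + 1) = a := by simpa using (hpat 0).1
  have hΘ1 : Θ (m₀ + 1) = ϑ' := by simpa using (hpat 0).2.2.1
  have F0 : IsPal ϑ P := by
    rw [hPdef, prefixes_succ, hlast]; exact closure_pal hff _
  have F1 : IsPal ϑ' (P ++ x) := by
    rw [hx, prefixes_succ, hΘ1]; exact closure_pal hgg _
  have F2 : [a] <+: x := by
    have h := closure_prefix (Θ (m₀ + 1)) (prefixes Δ Θ (m₀ + 1) ++ [Δ (m₀ + 1)])
    rw [← prefixes_succ, ← hx, hΔ1] at h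
    exact (List.prefix_append_right_inj P).1 h
  have hxlen : 1 ≤ x.length := by
    have := F2.length_le; simpa using this
  have hy : y = x.map Eb := by
    rw [hydef, anti_anti_eq, List.map_map]
    exact List.map_congr_left fun c _ => hfg c
  have hylen : y.length = x.length := by rw [hy]; simp
  have hP' : anti ϑ' P = P.map Eb := by
    conv_lhs => rw [← F0]
    rw [anti_anti_eq, List.map_map]
    exact List.map_congr_left fun c _ => hgf c
  have Fstar : B' ++ P.map Eb = P ++ x := by
    have h := F1
    rw [IsPal, anti_append, hP'] at h
    exact h
  have hmapB : B'.map Eb = A' := by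
    rw [hB'def, map_anti, hA'def]
    exact anti_congr hEg x
  have FI : P ++ z = B' ++ (A' ++ P) :=
    calc P ++ z = (P ++ x) ++ y := by rw [hzdef, List.append_assoc]
    _ = (B' ++ P.map Eb) ++ x.map Eb := by rw [Fstar, hy]
    _ = B' ++ ((P ++ x).map Eb) := by simp [List.append_assoc]
    _ = B' ++ ((B' ++ P.map Eb).map Eb) := by rw [Fstar]
    _ = B' ++ (B'.map Eb ++ (P.map Eb).map Eb) := by simp
    _ = B' ++ (A' ++ P) := by rw [hmapB, map_invol hEbEb]
  have Fpow : ∀ k, wpow (B' ++ A') k ++ P = P ++ wpow z k := by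
    intro k
    induction k with
    | zero => simp
    | succ k ih =>
      rw [wpow_succ' (B' ++ A') k, wpow_succ' z k, List.append_assoc,
        List.append_assoc, ← FI, ← List.append_assoc, ih, List.append_assoc]
  have hantiz : anti ϑ z = B' ++ A' := by
    rw [hzdef, anti_append, hydef, anti_anti hff]
  have hantiz' : anti ϑ' z = A' ++ B' := by
    rw [hzdef, anti_append, ← hB'def]
    congr 1
    rw [hydef, anti_anti_eq, List.map_map,
      List.map_congr_left (f := ϑ' ∘ ϑ) (g := Eb) (fun c _ => hgf c), hmapB]
  have C1 : ∀ k, IsPal ϑ (P ++ wpow z k) := by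
    intro k
    show anti ϑ _ = _
    rw [anti_append, anti_wpow, hantiz, F0, Fpow]
  have C2 : ∀ k, IsPal ϑ' ((P ++ wpow z k) ++ x) := by
    intro k
    show anti ϑ' _ = _
    rw [anti_append, anti_append, anti_wpow, hantiz', ← hB'def, hP',
      ← List.append_assoc, wpow_conj, List.append_assoc, Fstar,
      ← List.append_assoc, Fpow]
  have hzlen : z.length = x.length + x.length := by
    rw [hzdef]; simp [hylen]
  have hsm := prefixes_length_strictMono Δ Θ
  -- the gap hypothesis generator
  have hgap : ∀ n' : ℕ, ∀ j, (prefixes Δ Θ j).length ≤ (prefixes Δ Θ n').length ∨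
      (prefixes Δ Θ (n' + 1)).length ≤ (prefixes Δ Θ j).length := by
    intro n' j
    rcases Nat.lt_or_ge j (n' + 1) with h | h
    · exact Or.inl (hsm.monotone (by omega))
    · exact Or.inr (hsm.monotone h)
  obtain ⟨x2, hx2⟩ := F2
  have H : ∀ k, prefixes Δ Θ (m₀ + 1 + 2*k) = P ++ wpow z k ∧
      prefixes Δ Θ (m₀ + 2 + 2*k) = (P ++ wpow z k) ++ x := by
    intro k
    induction k with
    | zero =>
      constructor
      · rw [show m₀ + 1 + 2*0 = m₀ + 1 by ring, ← hPdef]; simp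
      · rw [show m₀ + 2 + 2*0 = m₀ + 2 by ring, ← hx]; simp
    | succ k ih =>
      obtain ⟨ih1, ih2⟩ := ih
      have hΘA : Θ (m₀ + 2 + 2*k) = ϑ := (hpat k).2.2.2
      have hΔA : Δ (m₀ + 2 + 2*k) = Eb a := (hpat k).2.1
      have hstepA : prefixes Δ Θ (m₀ + 3 + 2*k) = P ++ wpow z (k+1) := by
        rw [show m₀ + 3 + 2*k = (m₀ + 2 + 2*k) + 1 by ring, prefixes_succ, hΘA, hΔA, ih2]
        have hT : P ++ wpow z (k+1) = ((P ++ wpow z k) ++ x) ++ y := by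
          rw [wpow_succ' z k, hzdef]
          simp [List.append_assoc]
        apply closure_eq hff
        · rw [hT]
          apply ((List.prefix_append_right_inj _).2 _).trans (List.prefix_refl _)
          rw [hy, ← hx2]
          exact ⟨List.map Eb x2, by simp⟩
        · exact C1 (k+1)
        · have h1 := congrArg List.length hT
          simp only [List.length_append, List.length_cons, List.length_nil] at *
          omega
        · intro s hsuf hpal
          have hbound := no_long_pal_suffix Δ Θ hnorm ϑ' ϑ hgf hfE hfS
            (m₀ + 2 + 2*k) (prefixes Δ Θ (m₀ + 1 + 2*k)).length
            (by intro j
                rcases hgap (m₀ + 1 + 2*k) j with h | h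
                · exact Or.inl h
                · right; rwa [show m₀ + 1 + 2*k + 1 = m₀ + 2 + 2*k by ring] at h)
            (by rw [ih2]; exact C2 k)
            (Eb a) s (by rw [ih2]; exact hsuf) hpal
          have h1 := congrArg List.length ih1
          have h2 := congrArg List.length hT
          have h3 : (wpow z (k+1)).length = (wpow z k).length + z.length := by
            rw [wpow_succ']; simp
          simp only [List.length_append, List.length_cons, List.length_nil] at *
          omega
      have hΘB : Θ (m₀ + 3 + 2*k) = ϑ' := by
        have h := (hpat (k+1)).2.2.1
        rwa [show m₀ + 1 + 2*(k+1) = m₀ + 3 + 2*k by ring] at h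
      have hΔB : Δ (m₀ + 3 + 2*k) = a := by
        have h := (hpat (k+1)).1
        rwa [show m₀ + 1 + 2*(k+1) = m₀ + 3 + 2*k by ring] at h
      have hstepB : prefixes Δ Θ (m₀ + 2 + 2*(k+1)) = (P ++ wpow z (k+1)) ++ x := by
        rw [show m₀ + 2 + 2*(k+1) = (m₀ + 3 + 2*k) + 1 by ring, prefixes_succ, hΘB, hΔB,
          hstepA]
        apply closure_eq hgg
        · apply (List.prefix_append_right_inj _).2
          rw [← hx2]
          exact ⟨x2, by simp⟩
        · exact C2 (k+1)
        · have h3 : (wpow z (k+1)).length = (wpow z k).length + z.length := by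
            rw [wpow_succ']; simp
          simp only [List.length_append, List.length_cons, List.length_nil] at *
          omega
        · intro s hsuf hpal
          have hbound := no_long_pal_suffix Δ Θ hnorm ϑ ϑ' hfg hgE hgS
            (m₀ + 3 + 2*k) (prefixes Δ Θ (m₀ + 2 + 2*k)).length
            (by intro j
                rcases hgap (m₀ + 2 + 2*k) j with h | h
                · exact Or.inl h
                · right; rwa [show m₀ + 2 + 2*k + 1 = m₀ + 3 + 2*k by ring] at h)
            (by rw [hstepA]; exact C1 (k+1))
            a s (by rw [hstepA]; exact hsuf) hpal
          have h1 := congrArg List.length ih2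
          have h3 : (wpow z (k+1)).length = (wpow z k).length + z.length := by
            rw [wpow_succ']; simp
          simp only [List.length_append, List.length_cons, List.length_nil] at *
          omega
      constructor
      · rw [show m₀ + 1 + 2*(k+1) = m₀ + 3 + 2*k by ring]; exact hstepA
      · exact hstepB
  constructor
  · intro n hn
    obtain ⟨k, hk⟩ : ∃ k, n = m₀ + 1 + 2*k ∨ n = m₀ + 2 + 2*k :=
      ⟨(n - m₀ - 1)/2, by omega⟩
    rcases hk with rfl | rfl
    · exact ⟨k, Or.inl (H k).1⟩
    · exact ⟨k, Or.inr (H k).2⟩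
  · intro q hq
    rw [← hx, List.append_assoc, ← hzdef] at hq
    have hqlen : q.length = z.length := by
      have := congrArg List.length hq
      simp only [List.length_append] at this
      omega
    have hqne : q ≠ [] := by
      intro h
      rw [h] at hqlen
      simp [hzlen] at hqlen
      omega
    have hqpow : ∀ k, wpow q k ++ P = P ++ wpow z k := by
      intro k
      induction k with
      | zero => simp
      | succ k ihq =>
        rw [wpow_succ' q k, wpow_succ' z k, List.append_assoc, hq,
          ← List.append_assoc, ihq, List.append_assoc]
    refine ⟨hqne, fun i => ?_⟩
    have hp : wpow q (i+1) <+: prefixes Δ Θ (m₀ + 1 + 2*(i+1)) := by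
      rw [(H (i+1)).1, ← hqpow (i+1)]
      exact List.prefix_append _ _
    have hpref : IsPref (wpow q (i+1)) (word Δ Θ) :=
      isPref_of_prefix hp (isPref_prefixes Δ Θ _)
    have hqpos : 1 ≤ q.length := by
      rcases q with _ | ⟨c, q⟩
      · exact absurd rfl hqne
      · simp
    have hilt : i < (wpow q (i+1)).length := by
      rw [wpow_length]
      calc i < i + 1 := by omega
      _ = (i+1) * 1 := by ring
      _ ≤ (i+1) * q.length := Nat.mul_le_mul_left _ hqpos
    rw [← hpref i hilt, wpow_getD q (i+1) i (by rwa [wpow_length] at hilt) default]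


/-- for a normalized binary bi-sequence of the form
`(ν̃(a ā)^ω, σ̃(ϑ̄ ϑ)^ω)` with `|ν̃| = |σ̃| = n₀ = m₀ + 1` and `σ̃` ending in `ϑ`,
every `w_n` with `n > n₀` equals `w_{n₀}(x·(ϑϑ̄)(x))^k` or `w_{n₀}(x·(ϑϑ̄)(x))^k·x`,
where `w_{n₀} x = w_{n₀+1}`; consequently `u` is purely periodic with period `q`,
where `q·w_{n₀} = w_{n₀+1}·(ϑϑ̄)(x)`. -/
theorem periodic_shape_binary_alternating (Δ : ℕ → Fin 2) (Θ : ℕ → Fin 2 → Fin 2)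
    (hΘ : ∀ n, Θ n = Rb ∨ Θ n = Eb)
    (hnorm : NormalizedB Δ Θ)
    (a : Fin 2) (ϑ ϑ' : Fin 2 → Fin 2)
    (hϑ : (ϑ = Rb ∧ ϑ' = Eb) ∨ (ϑ = Eb ∧ ϑ' = Rb))
    (m₀ : ℕ) (hlast : Θ m₀ = ϑ)
    (hpat : ∀ l : ℕ, Δ (m₀ + 1 + 2*l) = a ∧ Δ (m₀ + 2 + 2*l) = Eb a ∧
      Θ (m₀ + 1 + 2*l) = ϑ' ∧ Θ (m₀ + 2 + 2*l) = ϑ)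
    (x : List (Fin 2)) (hx : prefixes Δ Θ (m₀ + 1) ++ x = prefixes Δ Θ (m₀ + 2)) :
    (∀ n : ℕ, m₀ + 1 < n → ∃ k : ℕ,
      prefixes Δ Θ n = prefixes Δ Θ (m₀ + 1) ++ wpow (x ++ anti ϑ (anti ϑ' x)) k ∨
      prefixes Δ Θ n = prefixes Δ Θ (m₀ + 1) ++ wpow (x ++ anti ϑ (anti ϑ' x)) k ++ x) ∧
    ∀ q : List (Fin 2),
      q ++ prefixes Δ Θ (m₀ + 1) = prefixes Δ Θ (m₀ + 2) ++ anti ϑ (anti ϑ' x) →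
      PurePeriod q (word Δ Θ) := by
  exact periodic_shape_binary_alternating' Δ Θ hΘ hnorm a ϑ ϑ' hϑ m₀ hlast hpat x hx

end GPS
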